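/- The braid σ_1^{−4} σ_2^{−1} σ_1 σ_2^{−2} σ_1 Δ_3^2 in the braid group B_3 is not quasipositive. -/

import Mathlib

open FreeGroup in
/-- The braid relations on `n` generators. -/
def braidRels (n : ℕ) : Set (FreeGroup (Fin n)) :=
  {r | (∃ i j : Fin n, (i : ℕ) + 1 = (j : ℕ) ∧
          r = of i * of j * of i * (of j * of i * of j)⁻¹) ∨
       (∃ i j : Fin n, (i : ℕ) + 2 ≤ (j : ℕ) ∧
          r = of i * of j * (of j * of i)⁻¹)}

/-- The braid group `B_{n+1}`, presented with `n` generators `σ_1, …, σ_n`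
(so `Braid (m - 1)` is the braid group on `m` strands). -/
def Braid (n : ℕ) : Type := PresentedGroup (braidRels n)

instance (n : ℕ) : Group (Braid n) :=
  inferInstanceAs (Group (PresentedGroup (braidRels n)))

/-- The Artin generator `σ_{i+1}` of the braid group (indices start at `0`,
so `σ 0` is the generator usually written `σ_1`). -/
def σ {n : ℕ} (i : Fin n) : Braid n := PresentedGroup.of i

/-- A braid is quasipositive if it can be written as a (possibly empty) product
of conjugates `w σ_1 w⁻¹` of the first Artin generator. -/
def Quasipositive {n : ℕ} [NeZero n] (b : Braid n) : Prop :=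
  ∃ l : List (Braid n), b = (l.map fun w => w * σ 0 * w⁻¹).prod


/-- `σ_1` in the braid group `B_3`. -/
def σ₁ : Braid 2 := σ 0
/-- `σ_2` in the braid group `B_3`. -/
def σ₂ : Braid 2 := σ 1
/-- The Garside element `Δ_3 = σ_1 σ_2 σ_1` of `B_3`. -/
def Δ₃ : Braid 2 := σ₁ * σ₂ * σ₁

-- exponent sum
def expf : Fin 2 → Multiplicative ℤ := fun _ => Multiplicative.ofAdd 1

lemma exp_rels : ∀ r ∈ braidRels 2, FreeGroup.lift expf r = 1 := by
  rintro r (⟨i, j, hij, rfl⟩ | ⟨i, j, hij, rfl⟩)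
  · simp [expf]
  · have := j.isLt; omega

def ε : Braid 2 →* Multiplicative ℤ := PresentedGroup.toGroup exp_rels

-- Burau-at-(-1) / SL2 representation into units of 2x2 integer matrices
abbrev M2 := Matrix (Fin 2) (Fin 2) ℤ

def A : M2ˣ := ⟨!![1,1;0,1], !![1,-1;0,1], by decide, by decide⟩
def B : M2ˣ := ⟨!![1,0;-1,1], !![1,0;1,1], by decide, by decide⟩

def matf : Fin 2 → M2ˣ := ![A, B]

lemma mat_rels : ∀ r ∈ braidRels 2, FreeGroup.lift matf r = 1 := by
  rintro r (⟨i, j, hij, rfl⟩ | ⟨i, j, hij, rfl⟩)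
  · fin_cases i <;> fin_cases j <;> simp_all [matf]
    ext : 1
    show (A.val * B.val * A.val) * (B.inv * (A.inv * B.inv)) = 1
    decide
  · have := j.isLt; omega

def φ : Braid 2 →* M2ˣ := PresentedGroup.toGroup mat_rels

theorem lem3_braid_not_quasipositive :
    ¬ Quasipositive ((σ₁ ^ 4)⁻¹ * σ₂⁻¹ * σ₁ * (σ₂ ^ 2)⁻¹ * σ₁ * Δ₃ ^ 2) := by
  rintro ⟨l, hl⟩
  -- exponent sum of b is 1
  have hεσ : ∀ i : Fin 2, ε (σ i) = Multiplicative.ofAdd 1 := fun i =>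
    PresentedGroup.toGroup.of exp_rels
  have hεb : ε ((σ₁ ^ 4)⁻¹ * σ₂⁻¹ * σ₁ * (σ₂ ^ 2)⁻¹ * σ₁ * Δ₃ ^ 2)
      = Multiplicative.ofAdd 1 := by
    simp only [Δ₃, σ₁, σ₂, map_mul, map_inv, map_pow, hεσ]
    decide
  -- hence the list has length 1
  have hlen : l.length = 1 := by
    have h2 : ε ((l.map fun w => w * σ 0 * w⁻¹).prod)
        = Multiplicative.ofAdd (l.length : ℤ) := by
      rw [map_list_prod, List.map_map]
      have : (List.map (ε ∘ fun w => w * σ 0 * w⁻¹) l)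
          = List.replicate l.length (Multiplicative.ofAdd 1) := by
        rw [List.eq_replicate_iff]
        refine ⟨by simp, ?_⟩
        intro x hx
        obtain ⟨w, _, rfl⟩ := List.mem_map.mp hx
        simp only [Function.comp_apply, map_mul, map_inv, hεσ]
        rw [mul_comm, inv_mul_cancel_left]
      rw [this, List.prod_replicate, ← ofAdd_nsmul]
      simp
    rw [← hl, hεb] at h2
    have := Multiplicative.ofAdd.injective h2.symm
    exact_mod_cast this
  obtain ⟨w, rfl⟩ := List.length_eq_one_iff.mp hlen
  simp only [List.map_cons, List.map_nil, List.prod_cons, List.prod_nil, mul_one] at hl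
  -- apply the matrix representation and take traces
  have hφσ : ∀ i : Fin 2, φ (σ i) = matf i := fun i =>
    PresentedGroup.toGroup.of mat_rels
  have htr := congrArg (fun u : M2ˣ => Matrix.trace (u : M2)) (congrArg φ hl)
  simp only [map_mul, map_inv, map_pow] at htr
  rw [show φ σ₁ = A from hφσ 0, show φ σ₂ = B from hφσ 1,
      show φ (σ 0) = A from hφσ 0,
      show φ Δ₃ = φ σ₁ * φ σ₂ * φ σ₁ by rw [show Δ₃ = σ₁ * σ₂ * σ₁ from rfl]; simp [map_mul],
      show φ σ₁ = A from hφσ 0, show φ σ₂ = B from hφσ 1] at htr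
  -- LHS trace is 10
  have hL : Matrix.trace
      ((((A ^ 4)⁻¹ * B⁻¹ * A * (B ^ 2)⁻¹ * A * (A * B * A) ^ 2 : M2ˣ)) : M2) = 10 := by
    decide
  -- RHS trace is 2 (conjugation invariance)
  have hR : Matrix.trace (((φ w * A * (φ w)⁻¹ : M2ˣ)) : M2) = 2 := by
    rw [Units.val_mul, Units.val_mul, Matrix.trace_mul_comm, ← mul_assoc]
    norm_num [← Units.val_mul]
    decide
  rw [hL, hR] at htr
  exact absurd htr (by norm_num)
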